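/- Let S ⊂ ℤ be finite with |S| ≥ 2, let d = gcd{a - a' : a, a' ∈ S}, and let Diff_S = {(x,y) ∈ ℤ² : y - x ∈ S}. Then for any a ≤ b with d dividing b - a, the relation Diff_T with T = {a, a+d, a+2d, ..., b} (a d-progression) is primitively positively definable from suc and Diff_S over ℤ: there is a formula built from existential quantification, conjunction, the relation y = x + 1, and Diff_S that defines Diff_T. -/

import Mathlib

/-- Primitive positive formulas over the signature `{suc, Diff_S, =}`, where the semantics
of the `Diff` atom is given by a set `S` supplied to `eval`. -/
inductive PP : ℕ → Type
  | suc {n} (i j : Fin n) : PP n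
  | diff {n} (i j : Fin n) : PP n
  | eq {n} (i j : Fin n) : PP n
  | and {n} (φ ψ : PP n) : PP n
  | ex {n} (φ : PP (n + 1)) : PP n

def PP.eval (S : Set ℤ) : {n : ℕ} → PP n → (Fin n → ℤ) → Prop
  | _, .suc i j, v => v j = v i + 1
  | _, .diff i j, v => v j - v i ∈ S
  | _, .eq i j, v => v i = v j
  | _, .and φ ψ, v => PP.eval S φ v ∧ PP.eval S ψ v
  | _, .ex φ, v => ∃ z : ℤ, PP.eval S φ (Fin.cons z v)

open Pointwise

namespace StmtAux

def ext {n m : ℕ} (f : Fin n → Fin m) : Fin (n+1) → Fin (m+1) :=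
  Fin.cons 0 (Fin.succ ∘ f)

def rename : {n m : ℕ} → (Fin n → Fin m) → PP n → PP m
  | _, _, f, .suc i j => .suc (f i) (f j)
  | _, _, f, .diff i j => .diff (f i) (f j)
  | _, _, f, .eq i j => .eq (f i) (f j)
  | _, _, f, .and φ ψ => .and (rename f φ) (rename f ψ)
  | _, _, f, .ex φ => .ex (rename (ext f) φ)

lemma cons_comp_ext {n m : ℕ} (f : Fin n → Fin m) (z : ℤ) (v : Fin m → ℤ) :
    (Fin.cons z v : Fin (m+1) → ℤ) ∘ ext f = Fin.cons z (v ∘ f) := by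
  funext i
  refine Fin.cases ?_ ?_ i
  · simp [ext]
  · intro j; simp [ext]

lemma eval_rename (S : Set ℤ) : ∀ {n m : ℕ} (f : Fin n → Fin m) (φ : PP n) (v : Fin m → ℤ),
    PP.eval S (rename f φ) v ↔ PP.eval S φ (v ∘ f) := by
  intro n m f φ
  induction φ generalizing m with
  | suc i j => intro v; rfl
  | diff i j => intro v; rfl
  | eq i j => intro v; rfl
  | and φ ψ ihφ ihψ => intro v; exact and_congr (ihφ f v) (ihψ f v)
  | ex φ ih =>
      intro v
      simp only [rename, PP.eval]
      exact exists_congr fun z => by rw [ih (ext f) (Fin.cons z v), cons_comp_ext]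

/-- `R` is pp-definable as a binary difference relation from `suc` and `Diff_S`. -/
def Defines (S R : Set ℤ) : Prop :=
  ∃ φ : PP 2, ∀ x y : ℤ, PP.eval S φ ![x, y] ↔ y - x ∈ R

lemma defines_congr {S R R' : Set ℤ} (h : Defines S R) (e : R = R') : Defines S R' := e ▸ h

lemma defines_atom (S : Set ℤ) : Defines S S :=
  ⟨.diff 0 1, fun x y => by simp [PP.eval]⟩

lemma defines_one (S : Set ℤ) : Defines S {1} :=
  ⟨.suc 0 1, fun x y => by simp [PP.eval]; omega⟩

lemma defines_zero (S : Set ℤ) : Defines S {0} :=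
  ⟨.eq 0 1, fun x y => by simp [PP.eval]; omega⟩

lemma defines_inter {S R R' : Set ℤ} (h : Defines S R) (h' : Defines S R') :
    Defines S (R ∩ R') := by
  obtain ⟨φ, hφ⟩ := h; obtain ⟨ψ, hψ⟩ := h'
  exact ⟨.and φ ψ, fun x y => by simp [PP.eval, hφ, hψ]⟩

lemma defines_neg {S R : Set ℤ} (h : Defines S R) : Defines S (-R) := by
  obtain ⟨φ, hφ⟩ := h
  refine ⟨rename ![1, 0] φ, fun x y => ?_⟩
  rw [eval_rename]
  have : (![x, y] : Fin 2 → ℤ) ∘ ![1, 0] = ![y, x] := by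
    funext i; fin_cases i <;> simp
  rw [this, hφ, Set.mem_neg]
  constructor
  · intro hh; simpa using hh
  · intro hh; simpa using hh

lemma defines_comp {S R R' : Set ℤ} (h : Defines S R) (h' : Defines S R') :
    Defines S (R + R') := by
  obtain ⟨φ, hφ⟩ := h; obtain ⟨ψ, hψ⟩ := h'
  refine ⟨.ex (.and (rename ![1, 0] φ) (rename ![0, 2] ψ)), fun x y => ?_⟩
  simp only [PP.eval, eval_rename]
  have e1 : ∀ z : ℤ, (Fin.cons z ![x, y] : Fin 3 → ℤ) ∘ ![1, 0] = ![x, z] := by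
    intro z; funext i; fin_cases i <;> rfl
  have e2 : ∀ z : ℤ, (Fin.cons z ![x, y] : Fin 3 → ℤ) ∘ ![0, 2] = ![z, y] := by
    intro z; funext i; fin_cases i <;> rfl
  constructor
  · rintro ⟨z, hz1, hz2⟩
    rw [e1 z, hφ] at hz1; rw [e2 z, hψ] at hz2
    have : y - x = (z - x) + (y - z) := by ring
    rw [this]
    exact Set.add_mem_add hz1 hz2
  · intro hm
    rw [Set.mem_add] at hm
    obtain ⟨r, hr, r', hr', hrr⟩ := hm
    refine ⟨x + r, ?_, ?_⟩
    · rw [e1, hφ]; simpa using hr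
    · rw [e2, hψ]
      have : y - (x + r) = r' := by omega
      rw [this]; exact hr'

lemma defines_natsingle (S : Set ℤ) : ∀ n : ℕ, Defines S {(n : ℤ)}
  | 0 => defines_congr (defines_zero S) rfl
  | (n+1) => by
      have h := defines_comp (defines_natsingle S n) (defines_one S)
      refine defines_congr h ?_
      rw [Set.singleton_add_singleton]
      norm_num

lemma defines_single (S : Set ℤ) (c : ℤ) : Defines S {c} := by
  rcases le_or_gt 0 c with hc | hc
  · have := defines_natsingle S c.toNat
    rwa [Int.toNat_of_nonneg hc] at this
  · have := defines_neg (defines_natsingle S (-c).toNat)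
    rw [Int.toNat_of_nonneg (by omega), Set.neg_singleton, neg_neg] at this
    exact this

lemma defines_shift {S R : Set ℤ} (h : Defines S R) (c : ℤ) : Defines S (R + {c}) :=
  defines_comp h (defines_single S c)

def nsum (A : Set ℤ) : ℕ → Set ℤ
  | 0 => {0}
  | k+1 => nsum A k + A

lemma defines_nsum {S A : Set ℤ} (h : Defines S A) : ∀ k, Defines S (nsum A k)
  | 0 => defines_zero S
  | (k+1) => defines_comp (defines_nsum h k) h

lemma nsum_subset_closure (A : Set ℤ) : ∀ k, nsum A k ⊆ (AddSubmonoid.closure A : Set ℤ)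
  | 0 => by
      intro x hx
      rcases hx with rfl
      exact AddSubmonoid.zero_mem _
  | (k+1) => by
      intro x hx
      rw [nsum, Set.mem_add] at hx
      obtain ⟨u, hu, s, hs, rfl⟩ := hx
      exact AddSubmonoid.add_mem _ (nsum_subset_closure A k hu) (AddSubmonoid.subset_closure hs)

lemma nsum_add_mem {A : Set ℤ} {x y : ℤ} {k : ℕ} (hx : x ∈ nsum A k) :
    ∀ {l : ℕ}, y ∈ nsum A l → x + y ∈ nsum A (k + l) := by
  intro l
  induction l generalizing y with
  | zero => intro hy; rcases hy with rfl; simpa using hx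
  | succ l ih =>
      intro hy
      rw [nsum, Set.mem_add] at hy
      obtain ⟨u, hu, s, hs, rfl⟩ := hy
      have := Set.add_mem_add (ih hu) hs
      rw [show k + (l+1) = (k + l) + 1 from rfl, nsum]
      convert this using 1
      ring

lemma mem_nsum_of_closure {A : Set ℤ} {x : ℤ} (hx : x ∈ AddSubmonoid.closure A) :
    ∃ k, x ∈ nsum A k := by
  induction hx using AddSubmonoid.closure_induction with
  | mem s hs =>
      refine ⟨1, ?_⟩
      rw [show (1:ℕ) = 0 + 1 from rfl, nsum, Set.mem_add]
      exact ⟨0, rfl, s, hs, by ring⟩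
  | zero => exact ⟨0, rfl⟩
  | add x y _ _ ihx ihy =>
      obtain ⟨k, hk⟩ := ihx; obtain ⟨l, hl⟩ := ihy
      exact ⟨k + l, nsum_add_mem hk hl⟩

lemma nsum_mono {A : Set ℤ} (h0 : (0:ℤ) ∈ A) {k l : ℕ} (hkl : k ≤ l) :
    nsum A k ⊆ nsum A l := by
  induction l with
  | zero => rw [Nat.le_zero] at hkl; subst hkl; exact subset_rfl
  | succ l ih =>
      rcases Nat.lt_or_ge k (l+1) with hlt | hge
      · intro x hx
        have hx' := ih (Nat.lt_succ_iff.mp hlt) hx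
        rw [nsum]
        have := Set.add_mem_add hx' h0
        simpa using this
      · have : k = l + 1 := le_antisymm hkl hge
        subst this; exact subset_rfl


def Zset (C : Set ℤ) (d : ℤ) : ℕ → Set ℤ
  | 0 => C
  | j+1 => C ∩ (Zset C d j + {d})

lemma defines_Zset {S C : Set ℤ} (h : Defines S C) (d : ℤ) : ∀ m, Defines S (Zset C d m)
  | 0 => h
  | (m+1) => defines_inter h (defines_shift (defines_Zset h d m) d)

lemma mem_Zset {C : Set ℤ} {d : ℤ} : ∀ (m : ℕ) (x : ℤ),
    x ∈ Zset C d m ↔ ∀ j : ℕ, j ≤ m → x - (j : ℤ) * d ∈ C := by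
  intro m
  induction m with
  | zero =>
      intro x
      constructor
      · intro hx j hj
        interval_cases j
        simpa [Zset] using hx
      · intro h
        have := h 0 le_rfl
        simpa [Zset] using this
  | succ m ih =>
      intro x
      rw [Zset, Set.mem_inter_iff]
      have hadd : x ∈ Zset C d m + {d} ↔ x - d ∈ Zset C d m := by
        rw [Set.mem_add]
        constructor
        · rintro ⟨z, hz, c, rfl, rfl⟩
          simpa using hz
        · intro h
          exact ⟨x - d, h, d, rfl, by ring⟩
      rw [hadd, ih]
      constructor
      · rintro ⟨h0, hrest⟩ j hj
        rcases Nat.eq_zero_or_pos j with rfl | hjpos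
        · simpa using h0
        · obtain ⟨i, rfl⟩ : ∃ i, j = i + 1 := ⟨j - 1, by omega⟩
          have e : x - ((i + 1 : ℕ) : ℤ) * d = x - d - (i : ℤ) * d := by push_cast; ring
          rw [e]
          exact hrest i (by omega)
      · intro h
        refine ⟨by simpa using h 0 (by omega), fun j hj => ?_⟩
        have := h (j+1) (by omega)
        have e : x - ((j + 1 : ℕ) : ℤ) * d = x - d - (j : ℤ) * d := by push_cast; ring
        rw [e] at this
        exact this


end StmtAux

open StmtAux Pointwise

set_option maxHeartbeats 1600000 in
/-- Lemma on generated progressions: if `d` is the gcd of all differences of elements of a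
finite set `S` with at least two elements, then for any `d`-progression
`T = {a, a+d, …, b}` the relation `Diff_T` is pp-definable from `suc` and `Diff_S`. -/
theorem stmt_19 (S : Finset ℤ) (hS : 2 ≤ S.card) (d : ℤ)
    (hd0 : 0 < d)
    (hdvd : ∀ a ∈ S, ∀ a' ∈ S, d ∣ (a - a'))
    (hgcd : ∀ d' : ℤ, (∀ a ∈ S, ∀ a' ∈ S, d' ∣ (a - a')) → d' ∣ d)
    (a b : ℤ) (hab : a ≤ b) (hdiv : d ∣ (b - a)) :
    ∃ φ : PP 2, ∀ x y : ℤ,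
      PP.eval (↑S : Set ℤ) φ ![x, y] ↔
        (a ≤ y - x ∧ y - x ≤ b ∧ d ∣ (y - x - a)) := by
  classical
  have hne : S.Nonempty := Finset.card_pos.mp (by omega)
  set M := S.min' hne with hMdef
  have hMS : M ∈ S := S.min'_mem hne
  set A : Set ℤ := (↑S : Set ℤ) + {-M} with hAdef
  have hmemA : ∀ z : ℤ, z ∈ A ↔ z + M ∈ S := by
    intro z
    rw [hAdef, Set.mem_add]
    constructor
    · rintro ⟨t, ht, c, hc, hz⟩
      simp only [Set.mem_singleton_iff] at hc
      subst hc
      have ht' : t ∈ S := by simpa using ht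
      have : z + M = t := by omega
      rwa [this]
    · intro h
      exact ⟨z + M, by simpa using h, -M, rfl, by ring⟩
  have h0A : (0:ℤ) ∈ A := (hmemA 0).mpr (by simpa using hMS)
  have hAnn : ∀ z ∈ A, 0 ≤ z ∧ d ∣ z := by
    intro z hz
    rw [hmemA] at hz
    constructor
    · have := S.min'_le (z + M) hz
      omega
    · have := hdvd (z + M) hz M hMS
      simpa using this
  set Sem := AddSubmonoid.closure A with hSemdef
  have hSemNN : ∀ z ∈ Sem, 0 ≤ z ∧ d ∣ z := by
    intro z hz
    induction hz using AddSubmonoid.closure_induction with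
    | mem s hs => exact hAnn s hs
    | zero => exact ⟨le_rfl, dvd_zero d⟩
    | add u v hu hv ihu ihv =>
        exact ⟨by linarith [ihu.1, ihv.1], dvd_add ihu.2 ihv.2⟩
  -- d is in the subgroup generated by A
  have hdSub : d ∈ AddSubgroup.closure A := by
    obtain ⟨g, hg⟩ := Int.subgroup_cyclic (AddSubgroup.closure A)
    rw [hg, AddSubgroup.mem_closure_singleton]
    have hgdvd : ∀ z ∈ A, g ∣ z := by
      intro z hz
      have hz' : z ∈ AddSubgroup.closure A := AddSubgroup.subset_closure hz
      rw [hg, AddSubgroup.mem_closure_singleton] at hz'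
      obtain ⟨n, hn⟩ := hz'
      rw [smul_eq_mul] at hn
      exact ⟨n, by rw [← hn]; ring⟩
    have hgd : g ∣ d := by
      apply hgcd
      intro a1 ha1 a2 ha2
      have h1 : g ∣ (a1 - M) := hgdvd _ ((hmemA _).mpr (by simpa using ha1))
      have h2 : g ∣ (a2 - M) := hgdvd _ ((hmemA _).mpr (by simpa using ha2))
      have e : a1 - a2 = (a1 - M) - (a2 - M) := by ring
      rw [e]
      exact dvd_sub h1 h2
    obtain ⟨c, hc⟩ := hgd
    exact ⟨c, by rw [smul_eq_mul, hc]; ring⟩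
  -- d = P - Q with P Q in the monoid closure
  have hrep : ∀ x ∈ AddSubgroup.closure A, ∃ P Q : ℤ, P ∈ Sem ∧ Q ∈ Sem ∧ x = P - Q := by
    intro x hx
    induction hx using AddSubgroup.closure_induction with
    | mem s hs =>
        exact ⟨s, 0, AddSubmonoid.subset_closure hs, AddSubmonoid.zero_mem _, by ring⟩
    | zero => exact ⟨0, 0, AddSubmonoid.zero_mem _, AddSubmonoid.zero_mem _, by ring⟩
    | add u v hu hv ihu ihv =>
        obtain ⟨P1, Q1, hP1, hQ1, e1⟩ := ihu
        obtain ⟨P2, Q2, hP2, hQ2, e2⟩ := ihv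
        exact ⟨P1 + P2, Q1 + Q2, AddSubmonoid.add_mem _ hP1 hP2,
          AddSubmonoid.add_mem _ hQ1 hQ2, by omega⟩
    | neg u hu ihu =>
        obtain ⟨P1, Q1, hP1, hQ1, e1⟩ := ihu
        exact ⟨Q1, P1, hQ1, hP1, by omega⟩
  obtain ⟨P, Q, hP, hQ, hdPQ⟩ := hrep d hdSub
  have hQnn := hSemNN Q hQ
  have hPnn := hSemNN P hP
  set q : ℕ := (Q / d).toNat with hqdef
  have hQeq : Q = (q : ℤ) * d := by
    obtain ⟨c, hc⟩ := hQnn.2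
    have hc0 : 0 ≤ c := by nlinarith [hQnn.1]
    have : (q : ℤ) = c := by
      rw [hqdef, hc]
      rw [Int.mul_ediv_cancel_left _ (by omega : d ≠ 0)]
      exact Int.toNat_of_nonneg hc0
    rw [this]
    rw [hc]; ring
  -- all large multiples of d are in Sem
  have hbase : ∀ s : ℕ, q * q ≤ s → ((s:ℤ) * d ∈ Sem) := by
    intro s hs
    rcases Nat.eq_zero_or_pos q with hq0 | hqpos
    · have hdP : d = P := by
        rw [hq0] at hQeq
        simp at hQeq
        omega
      have : (s:ℤ) * d = s • P := by rw [nsmul_eq_mul, hdP]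
      rw [this]
      exact nsmul_mem hP s
    · set c := s / q with hcdef
      set r := s % q with hrdef
      have hr : r < q := Nat.mod_lt _ hqpos
      have hqc : q ≤ c := (Nat.le_div_iff_mul_le hqpos).mpr hs
      have hrc : r ≤ c := by omega
      have hseq : s = c * q + r := by
        rw [hcdef, hrdef, Nat.mul_comm (s / q) q]
        exact (Nat.div_add_mod s q).symm
      have key : (s:ℤ) * d = ((c - r : ℕ) : ℤ) * Q + (r:ℤ) * P := by
        rw [Nat.cast_sub hrc, hQeq]
        have hPe : P = d + (q:ℤ) * d := by omega
        rw [hPe, hseq]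
        push_cast
        ring
      rw [key]
      have h1 : ((c - r : ℕ) : ℤ) * Q ∈ Sem := by
        have := nsmul_mem hQ (c - r)
        rwa [nsmul_eq_mul] at this
      have h2 : ((r : ℕ) : ℤ) * P ∈ Sem := by
        have := nsmul_mem hP r
        rwa [nsmul_eq_mul] at this
      exact AddSubmonoid.add_mem _ h1 h2
  have hex : ∃ t : ℕ, ∀ s : ℕ, t ≤ s → ((s:ℤ) * d ∈ Sem) := ⟨q * q, hbase⟩
  set m := Nat.find hex with hmdef
  have hmspec : ∀ s : ℕ, m ≤ s → ((s:ℤ) * d ∈ Sem) := Nat.find_spec hex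
  have hBgap : 0 < m → ((m:ℤ) - 1) * d ∉ Sem := by
    intro hm0
    have hmin := Nat.find_min hex (m := m - 1) (by omega)
    push_neg at hmin
    obtain ⟨s, hs1, hs2⟩ := hmin
    have hsm : s = m - 1 := by
      by_contra hne2
      exact hs2 (hmspec s (by omega))
    subst hsm
    have e : ((m - 1 : ℕ) : ℤ) = (m:ℤ) - 1 := by
      rw [Nat.cast_sub (by omega)]
      norm_num
    rwa [e] at hs2
  set B : ℤ := (m:ℤ) * d with hBdef
  have hB0 : 0 ≤ B := by positivity
  obtain ⟨tq, htq⟩ := hdiv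
  have htq0 : 0 ≤ tq := by nlinarith
  set tn : ℕ := tq.toNat with htndef
  have htn : (tn : ℤ) * d = b - a := by
    rw [htndef, Int.toNat_of_nonneg htq0, htq]
    ring
  -- choose k
  have hkex : ∀ N : ℕ, ∃ k, ∀ i : ℕ, i ≤ N → ((m + i : ℕ) : ℤ) * d ∈ nsum A k := by
    intro N
    induction N with
    | zero =>
        obtain ⟨k, hk⟩ := mem_nsum_of_closure (hmspec m le_rfl)
        refine ⟨k, fun i hi => ?_⟩
        have : i = 0 := by omega
        subst this
        simpa using hk
    | succ N ihN =>
        obtain ⟨k1, hk1⟩ := ihN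
        obtain ⟨k2, hk2⟩ := mem_nsum_of_closure (hmspec (m + (N+1)) (by omega))
        refine ⟨max k1 k2, fun i hi => ?_⟩
        rcases Nat.lt_or_ge i (N+1) with h | h
        · exact nsum_mono h0A (le_max_left _ _) (hk1 i (by omega))
        · have : i = N + 1 := by omega
          subst this
          exact nsum_mono h0A (le_max_right _ _) hk2
  obtain ⟨k, hk⟩ := hkex (m + tn)
  set C : Set ℤ := nsum A k with hCdef
  have hCSem : C ⊆ (Sem : Set ℤ) := nsum_subset_closure A k
  have hCfull : ∀ z : ℤ, d ∣ z → B ≤ z → z ≤ B + B + (b - a) → z ∈ C := by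
    intro z hdz hz1 hz2
    obtain ⟨w, hw⟩ : ∃ w : ℤ, z - B = d * w := by
      obtain ⟨c, hc⟩ := hdz
      exact ⟨c - m, by rw [hBdef, hc]; ring⟩
    have hw0 : 0 ≤ w := by nlinarith
    have hwle : w ≤ (tn : ℤ) + m := by nlinarith [htn]
    set i : ℕ := w.toNat with hidef
    have hiw : (i : ℤ) = w := Int.toNat_of_nonneg hw0
    have hile : i ≤ m + tn := by omega
    have he : z = ((m + i : ℕ) : ℤ) * d := by
      push_cast
      rw [hiw]
      rw [hBdef] at hw
      have e2 : ((m:ℤ) + w) * d = (m:ℤ) * d + d * w := by ring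
      rw [e2]
      omega
    rw [he]
    exact hk i hile
  set Z : Set ℤ := Zset C d m with hZdef
  have hZlow : ∀ x ∈ Z, d ∣ x ∧ B + B ≤ x := by
    intro x hx
    rw [hZdef, mem_Zset] at hx
    have h0 := hx 0 (by omega)
    simp only [Nat.cast_zero, zero_mul, sub_zero] at h0
    have hdx : d ∣ x := (hSemNN _ (hCSem h0)).2
    have hm' := hx m le_rfl
    have hxB : B ≤ x := by
      have := (hSemNN _ (hCSem hm')).1
      rw [hBdef]
      omega
    refine ⟨hdx, ?_⟩
    rcases Nat.eq_zero_or_pos m with hm0 | hm0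
    · have : B = 0 := by rw [hBdef, hm0]; norm_num
      omega
    · by_contra hcon
      push_neg at hcon
      obtain ⟨w, hw⟩ : ∃ w : ℤ, x - B = d * w := by
        obtain ⟨c, hc⟩ := hdx
        exact ⟨c - m, by rw [hBdef, hc]; ring⟩
      have hw0 : 0 ≤ w := by nlinarith
      have hwm : w < (m : ℤ) := by nlinarith
      set j : ℕ := w.toNat + 1 with hjdef
      have hjm : j ≤ m := by omega
      have hji := hx j hjm
      have he : x - (j : ℤ) * d = ((m:ℤ) - 1) * d := by
        push_cast [hjdef]
        rw [Int.toNat_of_nonneg hw0]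
        rw [hBdef] at hw
        ring_nf
        nlinarith [hw]
      rw [he] at hji
      exact hBgap hm0 (hCSem hji)
  have hZfull : ∀ x : ℤ, d ∣ x → B + B ≤ x → x ≤ B + B + (b - a) → x ∈ Z := by
    intro x hdx h1 h2
    rw [hZdef, mem_Zset]
    intro j hj
    have hjd : (j : ℤ) * d ≤ B := by
      rw [hBdef]
      have : (j : ℤ) ≤ (m : ℤ) := by exact_mod_cast hj
      nlinarith
    have hjd0 : 0 ≤ (j : ℤ) * d := by positivity
    refine hCfull _ ?_ (by omega) (by omega)
    exact dvd_sub hdx (Dvd.intro_left _ rfl)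
  set w : ℤ := 4 * B + (b - a) with hwdef
  set F : Set ℤ := Z ∩ (-Z + {w}) with hFdef
  have hmemF : ∀ z : ℤ, z ∈ F ↔ (B + B ≤ z ∧ z ≤ B + B + (b - a) ∧ d ∣ z) := by
    intro z
    have hmem2 : z ∈ -Z + {w} ↔ w - z ∈ Z := by
      rw [Set.mem_add]
      constructor
      · rintro ⟨u, hu, c, hc, huc⟩
        simp only [Set.mem_singleton_iff] at hc
        subst hc
        rw [Set.mem_neg] at hu
        have : -u = w - z := by omega
        rwa [this] at hu
      · intro h
        refine ⟨z - w, ?_, w, rfl, by ring⟩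
        rw [Set.mem_neg]
        have : -(z - w) = w - z := by ring
        rwa [this]
    rw [hFdef, Set.mem_inter_iff, hmem2]
    constructor
    · rintro ⟨h1, h2⟩
      obtain ⟨hd1, hl1⟩ := hZlow z h1
      obtain ⟨hd2, hl2⟩ := hZlow _ h2
      exact ⟨hl1, by omega, hd1⟩
    · rintro ⟨h1, h2, h3⟩
      refine ⟨hZfull z h3 h1 h2, hZfull _ ?_ (by omega) (by omega)⟩
      have hdw : d ∣ w := by
        rw [hwdef, hBdef]
        refine dvd_add (Dvd.intro (4 * m) (by ring)) ?_
        rw [← htn]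
        exact Dvd.intro_left _ rfl
      exact dvd_sub hdw h3
  -- the defining formula
  have hdefF : Defines (↑S : Set ℤ) (F + {a - (B + B)}) := by
    have hdefA : Defines (↑S : Set ℤ) A := defines_shift (defines_atom _) (-M)
    have hdefC : Defines (↑S : Set ℤ) C := defines_nsum hdefA k
    have hdefZ : Defines (↑S : Set ℤ) Z := defines_Zset hdefC d m
    exact defines_shift
      (defines_inter hdefZ (defines_shift (defines_neg hdefZ) w)) (a - (B + B))
  obtain ⟨φ, hφ⟩ := hdefF
  refine ⟨φ, fun x y => ?_⟩
  rw [hφ]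
  have hmem3 : y - x ∈ F + {a - (B + B)} ↔ (y - x) - (a - (B + B)) ∈ F := by
    rw [Set.mem_add]
    constructor
    · rintro ⟨u, hu, c, hc, huc⟩
      simp only [Set.mem_singleton_iff] at hc
      subst hc
      have : u = y - x - (a - (B + B)) := by omega
      rwa [this] at hu
    · intro h
      exact ⟨y - x - (a - (B + B)), h, a - (B + B), rfl, by ring⟩
  rw [hmem3, hmemF]
  constructor
  · rintro ⟨h1, h2, h3⟩
    refine ⟨by omega, by omega, ?_⟩
    have e : y - x - a = (y - x - (a - (B + B))) - (B + B) := by ring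
    rw [e]
    refine dvd_sub h3 ?_
    rw [hBdef]
    exact Dvd.intro (2 * m) (by ring)
  · rintro ⟨h1, h2, h3⟩
    refine ⟨by omega, by omega, ?_⟩
    have e : y - x - (a - (B + B)) = (y - x - a) + (B + B) := by ring
    rw [e]
    refine dvd_add h3 ?_
    rw [hBdef]
    exact Dvd.intro (2 * m) (by ring)
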